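/- Fix N and data φ_k ∈ ℝ^r, y_{k+1} = θᵀφ_k + w_{k+1} for k = 1,…,N, with Φ = Σφ_kφ_kᵀ positive definite having extreme eigenvalues λ_min, λ_max. Suppose ‖Φ^{-1/2} Σφ_k w_{k+1}‖ ≤ K√(log λ_max) for some K > 0, and each weight satisfies 0 < c_l ≤ c for l = 1,…,r. If β* minimizes J(β) = Σ(y_{k+1} − βᵀφ_k)² + λΣ_l c_l|β(l)| over ℝ^r with λ ≥ 0, then ‖β* − θ‖ ≤ 2K·(λ_max/λ_min)^{1/2}·√(log λ_max / λ_min) + c·√r·λ/λ_min. -/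

import Mathlib

open Matrix

/-- Euclidean norm of a vector in ℝ^n. -/
noncomputable def euclNorm {n : ℕ} (v : Fin n → ℝ) : ℝ := Real.sqrt (∑ i, v i ^ 2)

lemma euclNorm_nonneg {n : ℕ} (v : Fin n → ℝ) : 0 ≤ euclNorm v := Real.sqrt_nonneg _

lemma euclNorm_sq {n : ℕ} (v : Fin n → ℝ) : euclNorm v ^ 2 = v ⬝ᵥ v := by
  rw [euclNorm, Real.sq_sqrt (by positivity)]
  simp [dotProduct, pow_two]

lemma dot_le_norm_mul_norm {n : ℕ} (v w : Fin n → ℝ) :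
    v ⬝ᵥ w ≤ euclNorm v * euclNorm w := by
  have h := Finset.sum_mul_sq_le_sq_mul_sq Finset.univ v w
  have h2 : v ⬝ᵥ w ≤ |v ⬝ᵥ w| := le_abs_self _
  refine h2.trans ?_
  rw [← Real.sqrt_sq_eq_abs, euclNorm, euclNorm, ← Real.sqrt_mul (by positivity)]
  exact Real.sqrt_le_sqrt h

lemma mulVec_dot_mulVec {n : ℕ} (M N : Matrix (Fin n) (Fin n) ℝ) (x y : Fin n → ℝ) :
    (M *ᵥ x) ⬝ᵥ (N *ᵥ y) = x ⬝ᵥ ((Mᵀ * N) *ᵥ y) := by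
  rw [← Matrix.vecMul_transpose M x, ← Matrix.dotProduct_mulVec, Matrix.mulVec_mulVec]

lemma rayleigh {n : ℕ} {A : Matrix (Fin n) (Fin n) ℝ} (hA : A.IsHermitian) (x : Fin n → ℝ)
    {a b : ℝ} (ha : ∀ i, a ≤ hA.eigenvalues i) (hb : ∀ i, hA.eigenvalues i ≤ b) :
    a * (x ⬝ᵥ x) ≤ x ⬝ᵥ A *ᵥ x ∧ x ⬝ᵥ A *ᵥ x ≤ b * (x ⬝ᵥ x) := by
  set U : Matrix (Fin n) (Fin n) ℝ := (hA.eigenvectorUnitary : Matrix (Fin n) (Fin n) ℝ) with hU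
  set z : Fin n → ℝ := Uᵀ *ᵥ x with hz
  have hstar : star U = Uᵀ := by
    rw [Matrix.star_eq_conjTranspose, Matrix.conjTranspose_eq_transpose_of_trivial]
  have hUU : U * Uᵀ = 1 := by
    have := Matrix.mem_unitaryGroup_iff.mp hA.eigenvectorUnitary.2
    rwa [hstar] at this
  have hzz : z ⬝ᵥ z = x ⬝ᵥ x := by
    rw [hz, mulVec_dot_mulVec, Matrix.transpose_transpose, hUU, Matrix.one_mulVec]
  have hAx : x ⬝ᵥ A *ᵥ x = ∑ i, hA.eigenvalues i * z i ^ 2 := by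
    conv_lhs => rw [hA.spectral_theorem, Unitary.conjStarAlgAut_apply, hstar]
    rw [Matrix.mul_assoc, ← Matrix.mulVec_mulVec, ← Matrix.mulVec_mulVec,
      Matrix.dotProduct_mulVec, ← Matrix.mulVec_transpose, ← hz]
    simp [dotProduct, Matrix.mulVec_diagonal]
    exact Finset.sum_congr rfl fun i _ => by ring
  constructor
  · rw [hAx, ← hzz]
    have : z ⬝ᵥ z = ∑ i, z i ^ 2 := by simp [dotProduct, pow_two]
    rw [this, Finset.mul_sum]
    exact Finset.sum_le_sum fun i _ => mul_le_mul_of_nonneg_right (ha i) (sq_nonneg _)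
  · rw [hAx, ← hzz]
    have : z ⬝ᵥ z = ∑ i, z i ^ 2 := by simp [dotProduct, pow_two]
    rw [this, Finset.mul_sum]
    exact Finset.sum_le_sum fun i _ => mul_le_mul_of_nonneg_right (hb i) (sq_nonneg _)

theorem stmt14 {r N : ℕ} (hr : 0 < r) (φ : Fin N → Fin r → ℝ) (θ : Fin r → ℝ)
    (y w : Fin N → ℝ) (hy : ∀ k, y k = θ ⬝ᵥ φ k + w k)
    (hΦ : (∑ k, vecMulVec (φ k) (φ k)).PosDef)
    (K : ℝ) (hK : 0 < K)
    (hKbound : euclNorm (((hΦ.1.eigenvectorUnitary : Matrix (Fin r) (Fin r) ℝ) * diagonal (Real.sqrt ∘ hΦ.1.eigenvalues) *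
        (star hΦ.1.eigenvectorUnitary : Matrix (Fin r) (Fin r) ℝ))⁻¹.mulVec (∑ k, w k • φ k)) ≤
      K * Real.sqrt (Real.log (⨆ i, hΦ.1.eigenvalues i)))
    (c : Fin r → ℝ) (cb : ℝ) (hc : ∀ l, 0 < c l ∧ c l ≤ cb)
    (lam : ℝ) (hlam : 0 ≤ lam) (βstar : Fin r → ℝ)
    (hmin : ∀ β : Fin r → ℝ,
      ∑ k, (y k - βstar ⬝ᵥ φ k) ^ 2 + lam * ∑ l, c l * |βstar l| ≤
        ∑ k, (y k - β ⬝ᵥ φ k) ^ 2 + lam * ∑ l, c l * |β l|) :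
    euclNorm (βstar - θ) ≤
      2 * K * Real.sqrt ((⨆ i, hΦ.1.eigenvalues i) / (⨅ i, hΦ.1.eigenvalues i)) *
          Real.sqrt (Real.log (⨆ i, hΦ.1.eigenvalues i) / (⨅ i, hΦ.1.eigenvalues i)) +
        cb * Real.sqrt r * lam / (⨅ i, hΦ.1.eigenvalues i) := by
  haveI : NeZero r := ⟨hr.ne'⟩
  set A : Matrix (Fin r) (Fin r) ℝ := ∑ k, vecMulVec (φ k) (φ k) with hA
  set B : Matrix (Fin r) (Fin r) ℝ := (hΦ.1.eigenvectorUnitary : Matrix (Fin r) (Fin r) ℝ) * diagonal (Real.sqrt ∘ hΦ.1.eigenvalues) *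
        (star hΦ.1.eigenvectorUnitary : Matrix (Fin r) (Fin r) ℝ) with hBdef
  have hBherm : B.IsHermitian := by
    rw [hBdef, Matrix.IsHermitian, Matrix.conjTranspose_mul, Matrix.conjTranspose_mul,
      Matrix.diagonal_conjTranspose, Matrix.star_eq_conjTranspose,
      Matrix.conjTranspose_conjTranspose, Matrix.mul_assoc]
    congr 2
  have hBT : Bᵀ = B := by
    rw [← Matrix.conjTranspose_eq_transpose_of_trivial]; exact hBherm
  have hBB : B * B = A := by
    have hUU : (star hΦ.1.eigenvectorUnitary : Matrix (Fin r) (Fin r) ℝ) *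
        (hΦ.1.eigenvectorUnitary : Matrix (Fin r) (Fin r) ℝ) = 1 := Unitary.coe_star_mul_self _
    have hD : diagonal (Real.sqrt ∘ hΦ.1.eigenvalues) * diagonal (Real.sqrt ∘ hΦ.1.eigenvalues)
        = diagonal hΦ.1.eigenvalues := by
      rw [diagonal_mul_diagonal]; congr 1; funext i
      exact Real.mul_self_sqrt (hΦ.eigenvalues_pos i).le
    have hs := hΦ.1.spectral_theorem
    rw [Unitary.conjStarAlgAut_apply] at hs
    calc B * B = (hΦ.1.eigenvectorUnitary : Matrix (Fin r) (Fin r) ℝ) *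
          (diagonal (Real.sqrt ∘ hΦ.1.eigenvalues) *
          ((star hΦ.1.eigenvectorUnitary : Matrix (Fin r) (Fin r) ℝ) *
          (hΦ.1.eigenvectorUnitary : Matrix (Fin r) (Fin r) ℝ)) *
          diagonal (Real.sqrt ∘ hΦ.1.eigenvalues)) *
          (star hΦ.1.eigenvectorUnitary : Matrix (Fin r) (Fin r) ℝ) := by
          simp only [hBdef, Matrix.mul_assoc]
      _ = (hΦ.1.eigenvectorUnitary : Matrix (Fin r) (Fin r) ℝ) * diagonal hΦ.1.eigenvalues *
          (star hΦ.1.eigenvectorUnitary : Matrix (Fin r) (Fin r) ℝ) := by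
          rw [hUU, Matrix.mul_one, hD]
      _ = A := by
          rw [show (RCLike.ofReal ∘ hΦ.1.eigenvalues : Fin r → ℝ) = hΦ.1.eigenvalues from
            funext fun i => rfl] at hs
          exact hs.symm
  set lm : ℝ := ⨅ i, hΦ.1.eigenvalues i with hlm
  set lM : ℝ := ⨆ i, hΦ.1.eigenvalues i with hlM
  have hlow : ∀ i, lm ≤ hΦ.1.eigenvalues i := fun i =>
    ciInf_le (Finite.bddBelow_range _) i
  have hhigh : ∀ i, hΦ.1.eigenvalues i ≤ lM := fun i =>
    le_ciSup (Finite.bddAbove_range _) i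
  have hlm_pos : 0 < lm := by
    obtain ⟨i, hi⟩ := exists_eq_ciInf_of_finite (f := hΦ.1.eigenvalues)
    rw [hlm, ← hi]; exact hΦ.eigenvalues_pos i
  set μ : Fin r → ℝ := βstar - θ with hμ
  set S : Fin r → ℝ := ∑ k, w k • φ k with hS
  set nμ : ℝ := euclNorm μ with hnμ
  have hnμ0 : 0 ≤ nμ := euclNorm_nonneg _
  have hdotμ : ∀ k, βstar ⬝ᵥ φ k = θ ⬝ᵥ φ k + μ ⬝ᵥ φ k := by
    intro k; rw [hμ, sub_dotProduct]; ring
  -- A quadratic form identity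
  have hdsum : ∀ {ι : Type} (s : Finset ι) (v : Fin r → ℝ) (f : ι → Fin r → ℝ),
      v ⬝ᵥ (∑ k ∈ s, f k) = ∑ k ∈ s, v ⬝ᵥ f k := by
    intro ι s v f
    simp only [dotProduct, Finset.sum_apply, Finset.mul_sum]
    exact Finset.sum_comm
  have hAmul : A *ᵥ μ = ∑ k, (φ k ⬝ᵥ μ) • φ k := by
    funext i
    simp only [hA, Matrix.mulVec, dotProduct, Matrix.sum_apply, vecMulVec_apply,
      Finset.sum_apply, Pi.smul_apply, smul_eq_mul, Finset.sum_mul, Finset.mul_sum]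
    rw [Finset.sum_comm]
    exact Finset.sum_congr rfl fun k _ => Finset.sum_congr rfl fun j _ => by ring
  have hAform : μ ⬝ᵥ A *ᵥ μ = ∑ k, (μ ⬝ᵥ φ k) ^ 2 := by
    rw [hAmul, hdsum]
    refine Finset.sum_congr rfl fun k _ => ?_
    rw [dotProduct_smul, smul_eq_mul, dotProduct_comm (φ k) μ, pow_two]
  have hSdot : μ ⬝ᵥ S = ∑ k, w k * (μ ⬝ᵥ φ k) := by
    rw [hS, hdsum]
    exact Finset.sum_congr rfl fun k _ => by rw [dotProduct_smul, smul_eq_mul]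
  -- key inequality from minimality
  have key : ∑ k, (μ ⬝ᵥ φ k) ^ 2 ≤ 2 * (μ ⬝ᵥ S) + lam * ∑ l, c l * |μ l| := by
    have h1 := hmin θ
    have e1 : ∀ k, (y k - βstar ⬝ᵥ φ k) ^ 2
        = w k ^ 2 - 2 * (w k * (μ ⬝ᵥ φ k)) + (μ ⬝ᵥ φ k) ^ 2 := by
      intro k; rw [hy k, hdotμ k]; ring
    have e2 : ∀ k, (y k - θ ⬝ᵥ φ k) ^ 2 = w k ^ 2 := by
      intro k; rw [hy k]; ring
    simp only [e1, e2, Finset.sum_add_distrib, Finset.sum_sub_distrib, ← Finset.mul_sum] at h1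
    have e3 : ∑ l, c l * |θ l| - ∑ l, c l * |βstar l| ≤ ∑ l, c l * |μ l| := by
      rw [← Finset.sum_sub_distrib]
      refine Finset.sum_le_sum fun l _ => ?_
      rw [← mul_sub]
      refine mul_le_mul_of_nonneg_left ?_ (hc l).1.le
      calc |θ l| - |βstar l| ≤ |θ l - βstar l| := abs_sub_abs_le_abs_sub _ _
        _ = |μ l| := by rw [hμ]; simp [abs_sub_comm]
    have e4 : lam * ∑ l, c l * |θ l| - lam * ∑ l, c l * |βstar l| ≤ lam * ∑ l, c l * |μ l| := by
      rw [← mul_sub]; exact mul_le_mul_of_nonneg_left e3 hlam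
    rw [hSdot]
    linarith
  -- Rayleigh bounds
  have hray := rayleigh hΦ.1 μ hlow hhigh
  have hμμ : μ ⬝ᵥ μ = nμ ^ 2 := (euclNorm_sq μ).symm
  -- |μ ⬝ᵥ S| bound via Cauchy-Schwarz through the square root matrix
  have hdetB : IsUnit B.det := by
    have : B.det * B.det = A.det := by rw [← Matrix.det_mul, hBB]
    have hAdet : 0 < A.det := hΦ.det_pos
    have : B.det ≠ 0 := fun h => by simp [h] at this; exact hAdet.ne' this.symm
    exact this.isUnit
  have hBinv : B * B⁻¹ = 1 := Matrix.mul_nonsing_inv B hdetB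
  have hsplit : μ ⬝ᵥ S = (B *ᵥ μ) ⬝ᵥ (B⁻¹ *ᵥ S) := by
    rw [mulVec_dot_mulVec, hBT, hBinv, Matrix.one_mulVec]
  have hBμ : euclNorm (B *ᵥ μ) ≤ Real.sqrt lM * nμ := by
    have h1 : euclNorm (B *ᵥ μ) ^ 2 = μ ⬝ᵥ A *ᵥ μ := by
      rw [euclNorm_sq, mulVec_dot_mulVec, hBT, hBB]
    have h2 : μ ⬝ᵥ A *ᵥ μ ≤ lM * nμ ^ 2 := by rw [← hμμ]; exact hray.2
    have h3 : euclNorm (B *ᵥ μ) = Real.sqrt (μ ⬝ᵥ A *ᵥ μ) := by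
      rw [← h1, Real.sqrt_sq (euclNorm_nonneg _)]
    rw [h3]
    calc Real.sqrt (μ ⬝ᵥ A *ᵥ μ) ≤ Real.sqrt (lM * nμ ^ 2) := Real.sqrt_le_sqrt h2
      _ = Real.sqrt lM * nμ := by
          rw [Real.sqrt_mul (le_of_lt (lt_of_lt_of_le hlm_pos ((hlow 0).trans (hhigh 0)))),
            Real.sqrt_sq hnμ0]
  have hlM_nonneg : 0 ≤ lM := le_of_lt (lt_of_lt_of_le hlm_pos ((hlow 0).trans (hhigh 0)))
  have hμS : μ ⬝ᵥ S ≤ Real.sqrt lM * nμ * (K * Real.sqrt (Real.log lM)) := by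
    rw [hsplit]
    calc (B *ᵥ μ) ⬝ᵥ (B⁻¹ *ᵥ S) ≤ euclNorm (B *ᵥ μ) * euclNorm (B⁻¹ *ᵥ S) :=
        dot_le_norm_mul_norm _ _
      _ ≤ (Real.sqrt lM * nμ) * (K * Real.sqrt (Real.log lM)) := by
          refine mul_le_mul hBμ hKbound (euclNorm_nonneg _) ?_
          positivity
  -- L1 bound
  have hcb_pos : 0 < cb := lt_of_lt_of_le (hc 0).1 (hc 0).2
  have hL1 : ∑ l, c l * |μ l| ≤ cb * (Real.sqrt r * nμ) := by
    have s1 : ∑ l, c l * |μ l| ≤ ∑ l, cb * |μ l| :=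
      Finset.sum_le_sum fun l _ => mul_le_mul_of_nonneg_right (hc l).2 (abs_nonneg _)
    have s2 : ∑ l, cb * |μ l| = cb * ((fun _ : Fin r => (1:ℝ)) ⬝ᵥ fun l => |μ l|) := by
      simp [dotProduct, Finset.mul_sum]
    have s3 : (fun _ : Fin r => (1:ℝ)) ⬝ᵥ (fun l => |μ l|) ≤ Real.sqrt r * nμ := by
      refine (dot_le_norm_mul_norm _ _).trans_eq ?_
      congr 1
      · rw [euclNorm]; simp
      · rw [hnμ, euclNorm, euclNorm]; simp [sq_abs]
    calc ∑ l, c l * |μ l| ≤ cb * ((fun _ : Fin r => (1:ℝ)) ⬝ᵥ fun l => |μ l|) := s2 ▸ s1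
      _ ≤ cb * (Real.sqrt r * nμ) := mul_le_mul_of_nonneg_left s3 hcb_pos.le
  -- combine
  set T : ℝ := 2 * K * (Real.sqrt lM * Real.sqrt (Real.log lM)) + cb * Real.sqrt r * lam with hT
  have hT_nonneg : 0 ≤ T := by positivity
  have hmain : lm * nμ ^ 2 ≤ T * nμ := by
    have h0 : lm * nμ ^ 2 ≤ μ ⬝ᵥ A *ᵥ μ := by rw [← hμμ]; exact hray.1
    have h1 : μ ⬝ᵥ A *ᵥ μ ≤ 2 * (μ ⬝ᵥ S) + lam * ∑ l, c l * |μ l| := hAform ▸ key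
    have h2 : lam * ∑ l, c l * |μ l| ≤ lam * (cb * (Real.sqrt r * nμ)) :=
      mul_le_mul_of_nonneg_left hL1 hlam
    have h3 : 2 * (μ ⬝ᵥ S) ≤ 2 * (Real.sqrt lM * nμ * (K * Real.sqrt (Real.log lM))) := by
      linarith [hμS]
    rw [hT]
    nlinarith [h0, h1, h2, h3]
  have hfin : nμ ≤ T / lm := by
    rcases eq_or_lt_of_le hnμ0 with h | h
    · rw [← h]; positivity
    · rw [le_div_iff₀ hlm_pos]
      nlinarith [hmain]
  refine hfin.trans ?_
  -- show T / lm equals the RHS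
  have hrhs : T / lm = 2 * K * (Real.sqrt lM * Real.sqrt (Real.log lM)) / lm
      + cb * Real.sqrt r * lam / lm := by rw [hT, add_div]
  rw [hrhs]
  have hkey : Real.sqrt lM * Real.sqrt (Real.log lM) / lm
      = Real.sqrt (lM / lm) * Real.sqrt (Real.log lM / lm) := by
    rcases le_or_gt 0 (Real.log lM) with hL | hL
    · rw [Real.sqrt_div hlM_nonneg, Real.sqrt_div hL]
      rw [div_mul_div_comm, Real.mul_self_sqrt hlm_pos.le]
    · have z1 : Real.sqrt (Real.log lM) = 0 := Real.sqrt_eq_zero_of_nonpos hL.le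
      have z2 : Real.sqrt (Real.log lM / lm) = 0 :=
        Real.sqrt_eq_zero_of_nonpos (div_nonpos_of_nonpos_of_nonneg hL.le hlm_pos.le)
      rw [z1, z2]; ring
  rw [mul_div_assoc, hkey, ← mul_assoc]
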